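/- arXiv:1607.04912 — 2 statements merged into one kernel-verified Lean document; each statement's English description precedes it below -/
import Mathlib

section
/- Let u solve du + μ u dt = σ λ^{−γ} dw with deterministic u(0), and let ξ(t) = ∫_0^t u²(s) ds. Then for every n ∈ ℕ there exists a constant D_n > 0, depending only on n and t (not on μ, λ, u(0)), such that E[ξ(t)^n] ≤ D_n ((u²(0) + σ² t λ^{−2γ})/μ)^n for all t ∈ (0, T]. -/
open MeasureTheory ProbabilityTheory Filter

/-- A process `u` is a centered Gaussian process (on nonnegative times) with covariance
function `K` if every finite linear combination of its values is a centered Gaussian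
random variable with the variance prescribed by `K`. -/
def IsCenteredGaussianProcess {Ω : Type*} [MeasurableSpace Ω]
    (u : ℝ → Ω → ℝ) (P : Measure Ω) (K : ℝ → ℝ → ℝ) : Prop :=
  ∀ (n : ℕ) (t : Fin n → ℝ), (∀ i, 0 ≤ t i) → ∀ c : Fin n → ℝ,
    Measure.map (fun ω => ∑ i, c i * u (t i) ω) P =
      gaussianReal 0 (∑ i, ∑ j, c i * c j * K (t i) (t j)).toNNReal

lemma gauss_moment_fin (m : ℕ) :
    ∫⁻ x, ENNReal.ofReal (x ^ m) ∂(gaussianReal 0 1) < ⊤ := by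
  rw [gaussianReal_of_var_ne_zero 0 one_ne_zero]
  rw [lintegral_withDensity_eq_lintegral_mul _ (measurable_gaussianPDF 0 1)
    (by fun_prop)]
  have hint : Integrable (fun x : ℝ => gaussianPDFReal 0 1 x * x ^ m) := by
    have h := (integrable_rpow_mul_exp_neg_mul_sq (b := 1/2) one_half_pos
      (s := (m : ℝ)) (by exact_mod_cast neg_one_lt_zero.trans_le (Nat.cast_nonneg m))).const_mul
      ((Real.sqrt (2 * Real.pi))⁻¹)
    refine h.congr (Eventually.of_forall fun x => ?_)
    simp only [gaussianPDFReal, Real.rpow_natCast, NNReal.coe_one, mul_one, sub_zero]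
    ring_nf
  have := hint.lintegral_lt_top
  refine lt_of_le_of_lt (le_of_eq ?_) this
  refine lintegral_congr fun x => ?_
  simp only [Pi.mul_apply, gaussianPDF]
  rw [← ENNReal.ofReal_mul (gaussianPDFReal_nonneg _ _ _)]

lemma gauss_moment_scale (v : NNReal) (m : ℕ) :
    ∫⁻ x, ENNReal.ofReal (x ^ (2 * m)) ∂(gaussianReal 0 v)
      = ENNReal.ofReal ((v : ℝ) ^ m) * ∫⁻ x, ENNReal.ofReal (x ^ (2 * m)) ∂(gaussianReal 0 1) := by
  set c : ℝ := Real.sqrt v with hc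
  have hc2 : c ^ 2 = (v : ℝ) := Real.sq_sqrt v.coe_nonneg
  have hmap : (gaussianReal 0 1).map (c * ·) = gaussianReal 0 v := by
    rw [gaussianReal_map_const_mul c]
    congr 1
    · simp
    · ext
      simp [hc2]
  rw [← hmap, lintegral_map (by fun_prop) (measurable_const_mul c)]
  rw [← lintegral_const_mul _ (by fun_prop)]
  refine lintegral_congr fun x => ?_
  rw [← ENNReal.ofReal_mul (by positivity)]
  congr 1
  rw [mul_pow, pow_mul, hc2]

lemma jensen_pow {t : ℝ} (ht : 0 < t) {f : ℝ → ℝ} (hf : Continuous f)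
    (hf0 : ∀ r, 0 ≤ f r) (n : ℕ) :
    (∫ r in Set.Ioc (0:ℝ) t, f r) ^ n
      ≤ t ^ n * (t⁻¹ * ∫ r in Set.Ioc (0:ℝ) t, (f r) ^ n) := by
  set ν := volume.restrict (Set.Ioc (0:ℝ) t)
  have hνuniv : ν Set.univ = ENNReal.ofReal t := by
    simp [ν, Measure.restrict_apply, Real.volume_Ioc, ht.le]
  haveI : IsFiniteMeasure ν := ⟨hνuniv ▸ ENNReal.ofReal_lt_top⟩
  haveI : NeZero ν := ⟨by
    rw [← Measure.measure_univ_ne_zero, hνuniv]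
    simp [ht]⟩
  have hint : Integrable f ν :=
    (hf.integrableOn_Icc (a := 0) (b := t)).mono_set Set.Ioc_subset_Icc_self
  have hintn : Integrable (fun r => (f r) ^ n) ν :=
    ((hf.pow n).integrableOn_Icc (a := 0) (b := t)).mono_set Set.Ioc_subset_Icc_self
  have hJ := (convexOn_pow (𝕜 := ℝ) n).map_average_le (continuous_pow n).continuousOn
    isClosed_Ici (Eventually.of_forall fun r => hf0 r) hint hintn
  rw [average_eq, average_eq, measureReal_def, hνuniv, ENNReal.toReal_ofReal ht.le, smul_eq_mul,
    smul_eq_mul] at hJ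
  have h2 : (∫ r in Set.Ioc (0:ℝ) t, f r) ^ n
      = t ^ n * (t⁻¹ * ∫ r in Set.Ioc (0:ℝ) t, f r) ^ n := by
    field_simp
    rw [div_pow, mul_div_cancel₀ _ (pow_ne_zero n ht.ne')]
  rw [h2]
  exact mul_le_mul_of_nonneg_left hJ (by positivity)

lemma two_pow_bound {a b : ℝ} (ha : 0 ≤ a) (hb : 0 ≤ b) (n : ℕ) :
    (a + b) ^ n ≤ 2 ^ n * (a ^ n + b ^ n) := by
  have h1 : a + b ≤ 2 * max a b := by
    rcases max_cases a b with ⟨h, h'⟩ | ⟨h, h'⟩ <;> rw [h] <;> linarith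
  calc (a + b) ^ n ≤ (2 * max a b) ^ n :=
        pow_le_pow_left₀ (by positivity) h1 n
    _ = 2 ^ n * (max a b) ^ n := by rw [mul_pow]
    _ ≤ 2 ^ n * (a ^ n + b ^ n) := by
        refine mul_le_mul_of_nonneg_left ?_ (by positivity)
        rcases max_cases a b with ⟨h, _⟩ | ⟨h, _⟩ <;> rw [h] <;>
          [exact le_add_of_nonneg_right (by positivity);
           exact le_add_of_nonneg_left (by positivity)]

lemma integral_exp_mul_eq {cc : ℝ} (hc : cc ≠ 0) (s : ℝ) :
    ∫ x in (0:ℝ)..s, Real.exp (cc * x) = (Real.exp (cc * s) - 1) / cc := by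
  rw [intervalIntegral.integral_comp_mul_left (fun x => Real.exp x) hc]
  rw [mul_zero, integral_exp, Real.exp_zero, smul_eq_mul]
  field_simp

set_option maxHeartbeats 1000000 in
/-- **Moment bound for `ξ(t) = ∫_0^t u²(s) ds`.**
Let `u(t) = e^{-μt} u0 + σ λ^{-γ} e^{-μt} J(t)` be the Ornstein–Uhlenbeck solution of
`du + μu dt = σ λ^{-γ} dw` (with `J` the Wiener integral of `e^{μs}`). For every
`n ∈ ℕ` and `t ∈ (0, T]` there is a constant `D > 0`, depending only on `n` and `t`
(and not on `μ`, `λ`, `u0`), such that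
`E[ξ(t)^n] ≤ D ((u0² + σ² t λ^{-2γ})/μ)^n`. -/
theorem moment_bound_xi
    (σ γ T : ℝ) (hσ : 0 < σ) (hγ : 0 ≤ γ) (hT : 0 < T) (n : ℕ) :
    ∀ t ∈ Set.Ioc (0:ℝ) T, ∃ D > (0:ℝ),
      ∀ (μ lam u0 : ℝ), 0 < μ → 0 < lam →
      ∀ (Ω : Type) [MeasurableSpace Ω] (P : Measure Ω) [IsProbabilityMeasure P]
        (J u ξ : ℝ → Ω → ℝ),
        (∀ s, Measurable (J s)) →
        (∀ ω, Continuous fun s => J s ω) →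
        IsCenteredGaussianProcess J P
          (fun s r => ∫ x in (0:ℝ)..(min s r), Real.exp (2 * μ * x)) →
        (∀ s ω, u s ω =
          Real.exp (-(μ * s)) * u0 + σ * lam ^ (-γ) * Real.exp (-(μ * s)) * J s ω) →
        (∀ s ω, ξ s ω = ∫ r in (0:ℝ)..s, (u r ω) ^ 2) →
        ∫ ω, (ξ t ω) ^ n ∂P ≤ D * ((u0 ^ 2 + σ ^ 2 * t * lam ^ (-(2 * γ))) / μ) ^ n := by
  intro t ht
  obtain ⟨ht0, htT⟩ := ht
  obtain ⟨c, hc0, hCeq⟩ : ∃ c : ℝ, 0 ≤ c ∧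
      (∫⁻ x, ENNReal.ofReal (x ^ (2 * n)) ∂(gaussianReal 0 1)) = ENNReal.ofReal c :=
    ⟨_, ENNReal.toReal_nonneg, (ENNReal.ofReal_toReal (gauss_moment_fin (2 * n)).ne).symm⟩
  refine ⟨2 ^ n * (1 + c), by positivity, ?_⟩
  intro μ lam u0 hμ hlam Ω _ P _ J u ξ hJm hJc hG hu hξ
  set b : ℝ := σ * lam ^ (-γ) with hbdef
  have hlamγ : (0:ℝ) < lam ^ (-γ) := Real.rpow_pos_of_pos hlam _
  have hb : 0 < b := mul_pos hσ hlamγ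
  have hb2 : b ^ 2 = σ ^ 2 * lam ^ (-(2 * γ)) := by
    rw [hbdef, mul_pow]
    congr 1
    rw [← Real.rpow_natCast (lam ^ (-γ)) 2, ← Real.rpow_mul hlam.le]
    norm_num
    ring_nf
  have hlam2γ : (0:ℝ) < lam ^ (-(2 * γ)) := Real.rpow_pos_of_pos hlam _
  set X : ℝ := (u0 ^ 2 + σ ^ 2 * t * lam ^ (-(2 * γ))) / μ with hXdef
  have hX0 : 0 < X := by
    rw [hXdef]
    have h1 : (0:ℝ) < σ ^ 2 * t * lam ^ (-(2 * γ)) :=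
      mul_pos (mul_pos (by positivity) ht0) hlam2γ
    have h2 : (0:ℝ) ≤ u0 ^ 2 := sq_nonneg _
    positivity
  -- variance function
  have hVf : ∀ s : ℝ, (∫ x in (0:ℝ)..s, Real.exp (2 * μ * x))
      = (Real.exp (2 * μ * s) - 1) / (2 * μ) := fun s =>
    integral_exp_mul_eq (by positivity) s
  have hV0 : ∀ s : ℝ, 0 ≤ s → 0 ≤ ∫ x in (0:ℝ)..s, Real.exp (2 * μ * x) := by
    intro s hs
    rw [hVf]
    have h1 : (1:ℝ) ≤ Real.exp (2 * μ * s) := Real.one_le_exp (by positivity)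
    have h2 : (0:ℝ) < 2 * μ := by positivity
    have h3 : (0:ℝ) ≤ Real.exp (2 * μ * s) - 1 := by linarith
    positivity
  have hVb : ∀ s : ℝ, 0 ≤ s →
      Real.exp (-(2 * μ * s)) * (∫ x in (0:ℝ)..s, Real.exp (2 * μ * x)) ≤ (2 * μ)⁻¹ := by
    intro s hs
    rw [hVf]
    have hx : Real.exp (-(2 * μ * s)) * Real.exp (2 * μ * s) = 1 := by
      rw [← Real.exp_add, neg_add_cancel, Real.exp_zero]
    rw [div_eq_mul_inv, ← mul_assoc]
    calc Real.exp (-(2 * μ * s)) * (Real.exp (2 * μ * s) - 1) * (2 * μ)⁻¹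
        ≤ 1 * (2 * μ)⁻¹ := by
          refine mul_le_mul_of_nonneg_right ?_ (by positivity)
          nlinarith [Real.exp_pos (-(2 * μ * s))]
      _ = (2 * μ)⁻¹ := one_mul _
  -- law of J s and moments
  have hlaw : ∀ s : ℝ, 0 ≤ s → Measure.map (J s) P
      = gaussianReal 0 (∫ x in (0:ℝ)..s, Real.exp (2 * μ * x)).toNNReal := by
    intro s hs
    have h := hG 1 (fun _ => s) (fun _ => hs) (fun _ => 1)
    simpa [Fin.sum_univ_one, min_self] using h
  have hMom : ∀ s : ℝ, 0 ≤ s →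
      ∫⁻ ω, ENNReal.ofReal ((J s ω) ^ (2 * n)) ∂P
        = ENNReal.ofReal ((∫ x in (0:ℝ)..s, Real.exp (2 * μ * x)) ^ n)
            * ENNReal.ofReal c := by
    intro s hs
    calc ∫⁻ ω, ENNReal.ofReal ((J s ω) ^ (2 * n)) ∂P
        = ∫⁻ x, ENNReal.ofReal (x ^ (2 * n)) ∂(Measure.map (J s) P) :=
          (lintegral_map (f := fun x : ℝ => ENNReal.ofReal (x ^ (2 * n)))
            (by fun_prop) (hJm s)).symm
      _ = ENNReal.ofReal ((∫ x in (0:ℝ)..s, Real.exp (2 * μ * x)) ^ n)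
            * ENNReal.ofReal c := by
          rw [hlaw s hs, gauss_moment_scale, hCeq, Real.coe_toNNReal _ (hV0 s hs)]
  -- joint measurability
  have hJU : Measurable (Function.uncurry J) :=
    measurable_uncurry_of_continuous_of_measurable hJc hJm
  -- f and its properties
  set f : ℝ → Ω → ℝ := fun r ω => Real.exp (-(2 * μ * r)) * (J r ω) ^ 2 with hfdef
  have hfU : Measurable fun p : ℝ × Ω => f p.1 p.2 := by
    simp only [hfdef]
    exact ((Real.measurable_exp.comp ((measurable_fst.const_mul _).neg)).mul
      (hJU.pow_const 2))
  have hfc : ∀ ω, Continuous fun r => f r ω := by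
    intro ω
    simp only [hfdef]
    exact (Real.continuous_exp.comp (by fun_prop)).mul ((hJc ω).pow 2)
  have hf0 : ∀ r ω, 0 ≤ f r ω := fun r ω =>
    mul_nonneg (Real.exp_pos _).le (sq_nonneg _)
  have hucont : ∀ ω, Continuous fun r => u r ω := by
    intro ω
    have h : (fun r => u r ω) = fun r =>
        Real.exp (-(μ * r)) * u0 + b * Real.exp (-(μ * r)) * J r ω :=
      funext fun r => hu r ω
    rw [h]
    exact (((Real.continuous_exp.comp (by fun_prop)).mul continuous_const).add
      ((continuous_const.mul (Real.continuous_exp.comp (by fun_prop))).mul (hJc ω)))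
  have hxi_eq : ∀ ω, ξ t ω = ∫ r in Set.Ioc (0:ℝ) t, (u r ω) ^ 2 := fun ω => by
    rw [hξ, intervalIntegral.integral_of_le ht0.le]
  have hxi0 : ∀ ω, 0 ≤ ξ t ω := fun ω => by
    rw [hxi_eq]
    exact setIntegral_nonneg measurableSet_Ioc fun r _ => sq_nonneg _
  -- pointwise bound on ξ
  have hptA : ∀ ω, ξ t ω ≤ u0 ^ 2 / μ + 2 * b ^ 2 * ∫ r in Set.Ioc (0:ℝ) t, f r ω := by
    intro ω
    rw [hxi_eq]
    have int1 : IntegrableOn (fun r => (u r ω) ^ 2) (Set.Ioc 0 t) :=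
      (((hucont ω).pow 2).integrableOn_Icc (a := 0) (b := t)).mono_set
        Set.Ioc_subset_Icc_self
    have int2 : IntegrableOn
        (fun r => (2 * u0 ^ 2) * Real.exp (-(2 * μ * r)) + (2 * b ^ 2) * f r ω)
        (Set.Ioc 0 t) := by
      refine IntegrableOn.mono_set ?_ (Set.Ioc_subset_Icc_self (a := (0:ℝ)) (b := t))
      apply Continuous.integrableOn_Icc
      exact (continuous_const.mul (Real.continuous_exp.comp (by fun_prop))).add
        (continuous_const.mul (hfc ω))
    have step1 : ∫ r in Set.Ioc (0:ℝ) t, (u r ω) ^ 2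
        ≤ ∫ r in Set.Ioc (0:ℝ) t,
            ((2 * u0 ^ 2) * Real.exp (-(2 * μ * r)) + (2 * b ^ 2) * f r ω) := by
      refine setIntegral_mono_on int1 int2 measurableSet_Ioc fun r _ => ?_
      rw [hu r ω]
      have hE : Real.exp (-(μ * r)) * Real.exp (-(μ * r)) = Real.exp (-(2 * μ * r)) := by
        rw [← Real.exp_add]; ring_nf
      simp only [hfdef]
      nlinarith [sq_nonneg (Real.exp (-(μ * r)) * u0 - b * Real.exp (-(μ * r)) * J r ω),
        sq_nonneg (J r ω), Real.exp_pos (-(μ * r)), Real.exp_pos (-(2 * μ * r))]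
    have intE : IntegrableOn (fun r => Real.exp (-(2 * μ * r))) (Set.Ioc 0 t) :=
      ((Real.continuous_exp.comp (by fun_prop)).integrableOn_Icc
        (a := 0) (b := t)).mono_set Set.Ioc_subset_Icc_self
    have intf : IntegrableOn (fun r => f r ω) (Set.Ioc 0 t) :=
      ((hfc ω).integrableOn_Icc (a := 0) (b := t)).mono_set Set.Ioc_subset_Icc_self
    have step2 : ∫ r in Set.Ioc (0:ℝ) t,
          ((2 * u0 ^ 2) * Real.exp (-(2 * μ * r)) + (2 * b ^ 2) * f r ω)
        = (2 * u0 ^ 2) * (∫ r in Set.Ioc (0:ℝ) t, Real.exp (-(2 * μ * r)))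
          + (2 * b ^ 2) * ∫ r in Set.Ioc (0:ℝ) t, f r ω := by
      rw [integral_add (intE.const_mul _) (intf.const_mul _), integral_const_mul,
        integral_const_mul]
    have step3 : ∫ r in Set.Ioc (0:ℝ) t, Real.exp (-(2 * μ * r)) ≤ (2 * μ)⁻¹ := by
      rw [← intervalIntegral.integral_of_le ht0.le]
      have hform : ∫ r in (0:ℝ)..t, Real.exp (-(2 * μ) * r)
          = (Real.exp (-(2 * μ) * t) - 1) / (-(2 * μ)) :=
        integral_exp_mul_eq (neg_ne_zero.mpr (by positivity)) t
      have heq : ∫ r in (0:ℝ)..t, Real.exp (-(2 * μ * r))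
          = (Real.exp (-(2 * μ) * t) - 1) / (-(2 * μ)) := by
        rw [← hform]
        congr 1
        funext r
        ring_nf
      rw [heq]
      have h2 : (Real.exp (-(2 * μ) * t) - 1) / (-(2 * μ))
          = (1 - Real.exp (-(2 * μ) * t)) / (2 * μ) := by
        ring
      rw [h2, ← one_div]
      refine (div_le_div_iff_of_pos_right (by positivity : (0:ℝ) < 2 * μ)).mpr ?_
      nlinarith [Real.exp_pos (-(2 * μ) * t)]
    calc ∫ r in Set.Ioc (0:ℝ) t, (u r ω) ^ 2
        ≤ (2 * u0 ^ 2) * (∫ r in Set.Ioc (0:ℝ) t, Real.exp (-(2 * μ * r)))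
          + (2 * b ^ 2) * ∫ r in Set.Ioc (0:ℝ) t, f r ω := by rw [← step2]; exact step1
      _ ≤ u0 ^ 2 / μ + 2 * b ^ 2 * ∫ r in Set.Ioc (0:ℝ) t, f r ω := by
          refine add_le_add ?_ (le_of_eq (by ring))
          calc (2 * u0 ^ 2) * (∫ r in Set.Ioc (0:ℝ) t, Real.exp (-(2 * μ * r)))
              ≤ (2 * u0 ^ 2) * (2 * μ)⁻¹ :=
                mul_le_mul_of_nonneg_left step3 (by positivity)
            _ = u0 ^ 2 / μ := by field_simp
  -- pointwise bound on ξ^n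
  have hW0 : ∀ ω, 0 ≤ ∫ r in Set.Ioc (0:ℝ) t, f r ω := fun ω =>
    setIntegral_nonneg measurableSet_Ioc fun r _ => hf0 r ω
  have hWn0 : ∀ ω, 0 ≤ ∫ r in Set.Ioc (0:ℝ) t, (f r ω) ^ n := fun ω =>
    setIntegral_nonneg measurableSet_Ioc fun r _ => pow_nonneg (hf0 r ω) n
  have hpt : ∀ ω, (ξ t ω) ^ n
      ≤ 2 ^ n * ((u0 ^ 2 / μ) ^ n)
        + (2 ^ n * (2 * b ^ 2) ^ n * t ^ n * t⁻¹)
          * ∫ r in Set.Ioc (0:ℝ) t, (f r ω) ^ n := by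
    intro ω
    have h1 : (ξ t ω) ^ n ≤ (u0 ^ 2 / μ + 2 * b ^ 2 * ∫ r in Set.Ioc (0:ℝ) t, f r ω) ^ n :=
      pow_le_pow_left₀ (hxi0 ω) (hptA ω) n
    have h2 := two_pow_bound (a := u0 ^ 2 / μ)
      (b := 2 * b ^ 2 * ∫ r in Set.Ioc (0:ℝ) t, f r ω) (by positivity)
      (mul_nonneg (by positivity) (hW0 ω)) n
    have h3 : (2 * b ^ 2 * ∫ r in Set.Ioc (0:ℝ) t, f r ω) ^ n
        ≤ (2 * b ^ 2) ^ n * (t ^ n * (t⁻¹ * ∫ r in Set.Ioc (0:ℝ) t, (f r ω) ^ n)) := by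
      rw [mul_pow]
      exact mul_le_mul_of_nonneg_left
        (jensen_pow ht0 (hfc ω) (fun r => hf0 r ω) n) (by positivity)
    calc (ξ t ω) ^ n
        ≤ 2 ^ n * ((u0 ^ 2 / μ) ^ n
            + (2 * b ^ 2 * ∫ r in Set.Ioc (0:ℝ) t, f r ω) ^ n) := h1.trans h2
      _ ≤ 2 ^ n * ((u0 ^ 2 / μ) ^ n
            + (2 * b ^ 2) ^ n * (t ^ n * (t⁻¹ * ∫ r in Set.Ioc (0:ℝ) t, (f r ω) ^ n))) :=
          mul_le_mul_of_nonneg_left (add_le_add_right h3 _) (by positivity)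
      _ = 2 ^ n * ((u0 ^ 2 / μ) ^ n)
          + (2 ^ n * (2 * b ^ 2) ^ n * t ^ n * t⁻¹)
            * ∫ r in Set.Ioc (0:ℝ) t, (f r ω) ^ n := by ring
  -- measurability
  have hWm : Measurable fun ω => ∫ r in Set.Ioc (0:ℝ) t, (f r ω) ^ n := by
    have hsm : StronglyMeasurable fun p : Ω × ℝ => (f p.2 p.1) ^ n :=
      ((hfU.comp measurable_swap).pow_const n).stronglyMeasurable
    exact (hsm.integral_prod_right' (ν := volume.restrict (Set.Ioc (0:ℝ) t))).measurable
  have hxim : AEStronglyMeasurable (fun ω => (ξ t ω) ^ n) P := by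
    have huU : Measurable (Function.uncurry u) := by
      have h : Function.uncurry u = fun p : ℝ × Ω =>
          Real.exp (-(μ * p.1)) * u0 + b * Real.exp (-(μ * p.1)) * Function.uncurry J p := by
        funext p
        exact hu p.1 p.2
      rw [h]
      exact ((Real.measurable_exp.comp (measurable_fst.const_mul _).neg).mul
        measurable_const).add
        ((measurable_const.mul
          (Real.measurable_exp.comp (measurable_fst.const_mul _).neg)).mul hJU)
    have hsm : StronglyMeasurable fun p : Ω × ℝ => (u p.2 p.1) ^ 2 :=
      ((huU.comp measurable_swap).pow_const 2).stronglyMeasurable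
    have hxeq : (fun ω => ξ t ω) = fun ω => ∫ r in Set.Ioc (0:ℝ) t, (u r ω) ^ 2 :=
      funext hxi_eq
    have hxm : Measurable fun ω => ξ t ω := by
      rw [hxeq]
      exact (hsm.integral_prod_right' (ν := volume.restrict (Set.Ioc (0:ℝ) t))).measurable
    exact (hxm.pow_const n).aestronglyMeasurable
  -- bound on the ω-integral of the time integral of f^n
  have hWbound : ∫⁻ ω, ENNReal.ofReal (∫ r in Set.Ioc (0:ℝ) t, (f r ω) ^ n) ∂P
      ≤ ENNReal.ofReal ((2 * μ)⁻¹ ^ n) * ENNReal.ofReal c * ENNReal.ofReal t := by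
    have heq : ∀ ω, ENNReal.ofReal (∫ r in Set.Ioc (0:ℝ) t, (f r ω) ^ n)
        = ∫⁻ r in Set.Ioc (0:ℝ) t, ENNReal.ofReal ((f r ω) ^ n) := by
      intro ω
      refine ofReal_integral_eq_lintegral_ofReal ?_ ?_
      · exact (((hfc ω).pow n).integrableOn_Icc (a := 0) (b := t)).mono_set
          Set.Ioc_subset_Icc_self
      · exact Eventually.of_forall fun r => pow_nonneg (hf0 r ω) n
    calc ∫⁻ ω, ENNReal.ofReal (∫ r in Set.Ioc (0:ℝ) t, (f r ω) ^ n) ∂P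
        = ∫⁻ ω, (∫⁻ r in Set.Ioc (0:ℝ) t, ENNReal.ofReal ((f r ω) ^ n)) ∂P :=
          lintegral_congr heq
      _ = ∫⁻ r in Set.Ioc (0:ℝ) t, ∫⁻ ω, ENNReal.ofReal ((f r ω) ^ n) ∂P :=
          lintegral_lintegral_swap
            ((ENNReal.measurable_ofReal.comp
              ((hfU.comp measurable_swap).pow_const n)).aemeasurable)
      _ ≤ ∫⁻ _ in Set.Ioc (0:ℝ) t, ENNReal.ofReal ((2 * μ)⁻¹ ^ n) * ENNReal.ofReal c := by
          refine lintegral_mono_ae ?_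
          rw [ae_restrict_iff' measurableSet_Ioc]
          refine Eventually.of_forall fun r hr => ?_
          have hr0 : (0:ℝ) ≤ r := hr.1.le
          have hsplit : ∀ ω, (f r ω) ^ n
              = Real.exp (-(2 * μ * r)) ^ n * (J r ω) ^ (2 * n) := by
            intro ω
            simp only [hfdef]
            rw [mul_pow, ← pow_mul]
          calc ∫⁻ ω, ENNReal.ofReal ((f r ω) ^ n) ∂P
              = ∫⁻ ω, ENNReal.ofReal (Real.exp (-(2 * μ * r)) ^ n)
                  * ENNReal.ofReal ((J r ω) ^ (2 * n)) ∂P := by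
                refine lintegral_congr fun ω => ?_
                rw [hsplit ω, ENNReal.ofReal_mul (by positivity)]
            _ = ENNReal.ofReal (Real.exp (-(2 * μ * r)) ^ n)
                  * ∫⁻ ω, ENNReal.ofReal ((J r ω) ^ (2 * n)) ∂P :=
                lintegral_const_mul _ (by fun_prop)
            _ = ENNReal.ofReal (Real.exp (-(2 * μ * r)) ^ n)
                  * (ENNReal.ofReal ((∫ x in (0:ℝ)..r, Real.exp (2 * μ * x)) ^ n)
                      * ENNReal.ofReal c) := by rw [hMom r hr0]
            _ ≤ ENNReal.ofReal ((2 * μ)⁻¹ ^ n) * ENNReal.ofReal c := by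
                rw [← mul_assoc, ← ENNReal.ofReal_mul (by positivity), ← mul_pow]
                refine mul_le_mul_left (ENNReal.ofReal_le_ofReal ?_) _
                exact pow_le_pow_left₀
                  (mul_nonneg (Real.exp_pos _).le (hV0 r hr0)) (hVb r hr0) n
      _ = ENNReal.ofReal ((2 * μ)⁻¹ ^ n) * ENNReal.ofReal c * ENNReal.ofReal t := by
          rw [lintegral_const, Measure.restrict_apply_univ, Real.volume_Ioc, sub_zero]
  -- key lintegral bound
  have hK10 : (0:ℝ) ≤ 2 ^ n * ((u0 ^ 2 / μ) ^ n) := by positivity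
  have hK20 : (0:ℝ) ≤ 2 ^ n * (2 * b ^ 2) ^ n * t ^ n * t⁻¹ := by positivity
  have key : ∫⁻ ω, ENNReal.ofReal ((ξ t ω) ^ n) ∂P
      ≤ ENNReal.ofReal (2 ^ n * (1 + c) * X ^ n) := by
    calc ∫⁻ ω, ENNReal.ofReal ((ξ t ω) ^ n) ∂P
        ≤ ∫⁻ ω, (ENNReal.ofReal (2 ^ n * ((u0 ^ 2 / μ) ^ n))
            + ENNReal.ofReal (2 ^ n * (2 * b ^ 2) ^ n * t ^ n * t⁻¹)
              * ENNReal.ofReal (∫ r in Set.Ioc (0:ℝ) t, (f r ω) ^ n)) ∂P := by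
          refine lintegral_mono fun ω => ?_
          rw [← ENNReal.ofReal_mul hK20,
            ← ENNReal.ofReal_add hK10 (mul_nonneg hK20 (hWn0 ω))]
          exact ENNReal.ofReal_le_ofReal (hpt ω)
      _ = ENNReal.ofReal (2 ^ n * ((u0 ^ 2 / μ) ^ n))
            + ENNReal.ofReal (2 ^ n * (2 * b ^ 2) ^ n * t ^ n * t⁻¹)
              * ∫⁻ ω, ENNReal.ofReal (∫ r in Set.Ioc (0:ℝ) t, (f r ω) ^ n) ∂P := by
          rw [lintegral_add_left measurable_const,
            lintegral_const_mul _ hWm.ennreal_ofReal,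
            lintegral_const, measure_univ, mul_one]
      _ ≤ ENNReal.ofReal (2 ^ n * ((u0 ^ 2 / μ) ^ n))
            + ENNReal.ofReal (2 ^ n * (2 * b ^ 2) ^ n * t ^ n * t⁻¹)
              * (ENNReal.ofReal ((2 * μ)⁻¹ ^ n) * ENNReal.ofReal c * ENNReal.ofReal t) :=
          add_le_add_right (mul_le_mul_right hWbound _) _
      _ = ENNReal.ofReal (2 ^ n * ((u0 ^ 2 / μ) ^ n)
            + (2 ^ n * (2 * b ^ 2) ^ n * t ^ n * t⁻¹) * ((2 * μ)⁻¹ ^ n * c * t)) := by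
          have hp0 : (0:ℝ) ≤ (2 * μ)⁻¹ ^ n := pow_nonneg (by positivity) n
          have hq0 : (0:ℝ) ≤ (2 * μ)⁻¹ ^ n * c * t :=
            mul_nonneg (mul_nonneg hp0 hc0) ht0.le
          have e1 : ENNReal.ofReal ((2 * μ)⁻¹ ^ n * c * t)
              = ENNReal.ofReal ((2 * μ)⁻¹ ^ n) * ENNReal.ofReal c * ENNReal.ofReal t := by
            rw [ENNReal.ofReal_mul (mul_nonneg hp0 hc0), ENNReal.ofReal_mul hp0]
          rw [ENNReal.ofReal_add hK10 (mul_nonneg hK20 hq0), ENNReal.ofReal_mul hK20, e1]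
      _ ≤ ENNReal.ofReal (2 ^ n * (1 + c) * X ^ n) := by
          refine ENNReal.ofReal_le_ofReal ?_
          have hAX : u0 ^ 2 / μ ≤ X := by
            rw [hXdef]
            refine (div_le_div_iff_of_pos_right hμ).mpr ?_
            nlinarith [mul_pos (mul_pos (show (0:ℝ) < σ ^ 2 by positivity) ht0) hlam2γ]
          have h1 : 2 ^ n * ((u0 ^ 2 / μ) ^ n) ≤ 2 ^ n * X ^ n :=
            mul_le_mul_of_nonneg_left (pow_le_pow_left₀ (by positivity) hAX n)
              (by positivity)
          have hBX : b ^ 2 * t / μ ≤ X := by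
            rw [hXdef, hb2]
            refine (div_le_div_iff_of_pos_right hμ).mpr ?_
            nlinarith [sq_nonneg u0]
          have h2 : (2 ^ n * (2 * b ^ 2) ^ n * t ^ n * t⁻¹) * ((2 * μ)⁻¹ ^ n * c * t)
              ≤ 2 ^ n * (c * X ^ n) := by
            have heq2 : (2 ^ n * (2 * b ^ 2) ^ n * t ^ n * t⁻¹) * ((2 * μ)⁻¹ ^ n * c * t)
                = 2 ^ n * (c * (b ^ 2 * t / μ) ^ n) := by
              have e1 : t⁻¹ * t = 1 := inv_mul_cancel₀ ht0.ne'
              have e2 : (2:ℝ)⁻¹ ^ n * 2 ^ n = 1 := by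
                rw [← mul_pow, inv_mul_cancel₀ two_ne_zero, one_pow]
              linear_combination (2 ^ n * c * (b ^ 2) ^ n * t ^ n * μ⁻¹ ^ n * 2 ^ n * (2:ℝ)⁻¹ ^ n) * e1 + (2 ^ n * c * (b ^ 2) ^ n * t ^ n * μ⁻¹ ^ n) * e2
            rw [heq2]
            exact mul_le_mul_of_nonneg_left
              (mul_le_mul_of_nonneg_left
                (pow_le_pow_left₀ (by positivity) hBX n) hc0)
              (by positivity)
          calc 2 ^ n * ((u0 ^ 2 / μ) ^ n)
              + (2 ^ n * (2 * b ^ 2) ^ n * t ^ n * t⁻¹) * ((2 * μ)⁻¹ ^ n * c * t)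
              ≤ 2 ^ n * X ^ n + 2 ^ n * (c * X ^ n) := add_le_add h1 h2
            _ = 2 ^ n * (1 + c) * X ^ n := by ring
  -- conclude
  rw [integral_eq_lintegral_of_nonneg_ae
    (Eventually.of_forall fun ω => pow_nonneg (hxi0 ω) n) hxim]
  calc (∫⁻ ω, ENNReal.ofReal ((ξ t ω) ^ n) ∂P).toReal
      ≤ (ENNReal.ofReal (2 ^ n * (1 + c) * X ^ n)).toReal :=
        ENNReal.toReal_mono ENNReal.ofReal_ne_top key
    _ = 2 ^ n * (1 + c) * X ^ n := ENNReal.toReal_ofReal (by positivity)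
    _ = 2 ^ n * (1 + c) * ((u0 ^ 2 + σ ^ 2 * t * lam ^ (-(2 * γ))) / μ) ^ n := by
        rw [hXdef]
end

section
/- Let u solve du + μ u dt = dw with u(0) = 0, ξ(t) = ∫_0^t u²(s) ds, and Z = ∫_0^T ξ(t)² dt. Then E[Z] = (35 − 3e^{−4μT} − 32e^{−2μT})/(64μ⁵) − (9T + 10T e^{−2μT})/(16μ⁴) + T²/(8μ³) + T³/(12μ²). -/
open MeasureTheory ProbabilityTheory Filter

open Real Set NNReal ENNReal

lemma integrable_pow_mul_gauss {b : ℝ} (hb : 0 < b) (n : ℕ) :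
    Integrable fun x : ℝ => x ^ n * Real.exp (-b * x ^ 2) := by
  have hn : (-1 : ℝ) < n := lt_of_lt_of_le (by norm_num) (Nat.cast_nonneg n)
  have := integrable_rpow_mul_exp_neg_mul_sq hb hn
  simpa [Real.rpow_natCast] using this

lemma integral_pow_mul_gauss_rec {b : ℝ} (hb : 0 < b) (n : ℕ) :
    ∫ x : ℝ, x ^ (n + 2) * Real.exp (-b * x ^ 2) =
      ((n + 1: ℝ) / (2 * b)) * ∫ x : ℝ, x ^ n * Real.exp (-b * x ^ 2) := by
  set f : ℝ → ℝ := fun x => x ^ (n + 1) * Real.exp (-b * x ^ 2) with hf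
  have hderiv : ∀ x : ℝ, HasDerivAt f
      ((n + 1 : ℝ) * (x ^ n * Real.exp (-b * x ^ 2))
        - 2 * b * (x ^ (n + 2) * Real.exp (-b * x ^ 2))) x := by
    intro x
    have h1 : HasDerivAt (fun x : ℝ => x ^ (n + 1)) ((n + 1 : ℝ) * x ^ n) x := by
      simpa using hasDerivAt_pow (n + 1) x
    have h2 : HasDerivAt (fun x : ℝ => Real.exp (-b * x ^ 2))
        (Real.exp (-b * x ^ 2) * (-b * (2 * x))) x := by
      have : HasDerivAt (fun x : ℝ => -b * x ^ 2) (-b * (2 * x)) x := by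
        simpa using (hasDerivAt_pow 2 x).const_mul (-b)
      exact this.exp
    have := h1.mul h2
    refine this.congr_deriv ?_
    ring
  have hi0 : Integrable (fun x : ℝ => x ^ n * Real.exp (-b * x ^ 2)) :=
    integrable_pow_mul_gauss hb n
  have hi2 : Integrable (fun x : ℝ => x ^ (n + 2) * Real.exp (-b * x ^ 2)) :=
    integrable_pow_mul_gauss hb (n + 2)
  have hint : Integrable (fun x : ℝ =>
      (n + 1 : ℝ) * (x ^ n * Real.exp (-b * x ^ 2))
        - 2 * b * (x ^ (n + 2) * Real.exp (-b * x ^ 2))) :=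
    (hi0.const_mul _).sub (hi2.const_mul _)
  have key : ∫ x : ℝ, ((n + 1 : ℝ) * (x ^ n * Real.exp (-b * x ^ 2))
      - 2 * b * (x ^ (n + 2) * Real.exp (-b * x ^ 2))) = 0 := by
    have h1 : ∀ R : ℝ, ∫ x in (-R)..R, ((n + 1 : ℝ) * (x ^ n * Real.exp (-b * x ^ 2))
        - 2 * b * (x ^ (n + 2) * Real.exp (-b * x ^ 2))) = f R - f (-R) := fun R =>
      intervalIntegral.integral_eq_sub_of_hasDerivAt (fun x _ => hderiv x)
        hint.intervalIntegrable
    have h2 : Tendsto (fun R : ℝ => ∫ x in (-R)..R,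
        ((n + 1 : ℝ) * (x ^ n * Real.exp (-b * x ^ 2))
          - 2 * b * (x ^ (n + 2) * Real.exp (-b * x ^ 2)))) atTop
        (nhds (∫ x : ℝ, ((n + 1 : ℝ) * (x ^ n * Real.exp (-b * x ^ 2))
          - 2 * b * (x ^ (n + 2) * Real.exp (-b * x ^ 2))))) :=
      intervalIntegral_tendsto_integral hint tendsto_neg_atTop_atBot tendsto_id
    have hf0 : Tendsto f (Filter.cocompact ℝ) (nhds 0) := by
      have := tendsto_rpow_abs_mul_exp_neg_mul_sq_cocompact hb (n + 1 : ℝ)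
      rw [tendsto_zero_iff_norm_tendsto_zero]
      refine squeeze_zero (fun x => norm_nonneg _) (fun x => le_of_eq ?_) this
      rw [hf]
      simp only [norm_mul, Real.norm_eq_abs, abs_pow, Real.abs_exp]
      rw [show ((n : ℝ) + 1) = ((n + 1 : ℕ) : ℝ) by push_cast; ring, Real.rpow_natCast]
    have h3 : Tendsto (fun R : ℝ => f R - f (-R)) atTop (nhds 0) := by
      have ha : Tendsto f atTop (nhds 0) :=
        hf0.mono_left (cocompact_eq_atBot_atTop (α := ℝ) ▸ le_sup_right)
      have hb' : Tendsto (fun R : ℝ => f (-R)) atTop (nhds 0) :=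
        (hf0.mono_left (cocompact_eq_atBot_atTop (α := ℝ) ▸ le_sup_left)).comp
          tendsto_neg_atTop_atBot
      simpa using ha.sub hb'
    exact tendsto_nhds_unique ((funext h1 : _) ▸ h2) h3
  rw [integral_sub (hi0.const_mul _) (hi2.const_mul _), integral_const_mul,
    integral_const_mul, sub_eq_zero] at key
  rw [div_mul_eq_mul_div, key, mul_comm, mul_div_assoc,
    div_self (by positivity : (2*b) ≠ 0), mul_one]

lemma integral_gauss4 {b : ℝ} (hb : 0 < b) :
    ∫ x : ℝ, x ^ 4 * Real.exp (-b * x ^ 2) = 3 / (4 * b ^ 2) * Real.sqrt (π / b) := by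
  have h2 := integral_pow_mul_gauss_rec hb 0
  have h4 := integral_pow_mul_gauss_rec hb 2
  simp only [pow_zero, one_mul] at h2
  rw [integral_gaussian] at h2
  rw [show (2 : ℕ) + 2 = 4 from rfl] at h4
  rw [h4, h2]
  field_simp
  ring

lemma fourth_moment_gaussianReal (v : ℝ≥0) :
    Integrable (fun x : ℝ => x ^ 4) (gaussianReal 0 v) ∧
      ∫ x : ℝ, x ^ 4 ∂(gaussianReal 0 v) = 3 * (v : ℝ) ^ 2 := by
  rcases eq_or_ne v 0 with hv | hv
  · subst hv
    rw [gaussianReal_zero_var]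
    constructor
    · exact (integrable_const ((0:ℝ)^4)).congr (ae_eq_dirac fun x : ℝ => x ^ 4).symm
    · simp
  · have hv' : 0 < (v : ℝ) := by positivity
    set b : ℝ := (2 * (v:ℝ))⁻¹ with hbdef
    have hb : 0 < b := by positivity
    have hpdf : ∀ x : ℝ, gaussianPDFReal 0 v x
        = (Real.sqrt (2 * π * v))⁻¹ * Real.exp (-b * x ^ 2) := by
      intro x
      have hx : - (x - 0)^2 / (2 * (v:ℝ)) = -b * x ^ 2 := by
        rw [hbdef]; field_simp; ring
      rw [gaussianPDFReal, hx]
    rw [gaussianReal_of_var_ne_zero 0 hv]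
    have hmeas : Measurable fun x : ℝ => gaussianPDFReal 0 v x |>.toNNReal :=
      (measurable_gaussianPDFReal 0 v).real_toNNReal
    have hdens : (gaussianPDF 0 v) = fun x => ((gaussianPDFReal 0 v x).toNNReal : ℝ≥0∞) := by
      funext x; rw [gaussianPDF, ENNReal.ofReal]
    rw [hdens]
    have hInt : Integrable (fun x : ℝ => gaussianPDFReal 0 v x * x ^ 4) := by
      have : (fun x : ℝ => gaussianPDFReal 0 v x * x ^ 4)
          = fun x => (Real.sqrt (2 * π * v))⁻¹ * (x ^ 4 * Real.exp (-b * x ^ 2)) := by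
        funext x; rw [hpdf]; ring
      rw [this]
      exact (integrable_pow_mul_gauss hb 4).const_mul _
    constructor
    · rw [integrable_withDensity_iff_integrable_coe_smul hmeas]
      refine hInt.congr (Eventually.of_forall fun x => ?_)
      simp only [smul_eq_mul, Real.coe_toNNReal _ (gaussianPDFReal_nonneg 0 v x)]
    · rw [integral_withDensity_eq_integral_smul hmeas]
      have : ∀ x : ℝ, ((gaussianPDFReal 0 v x).toNNReal : ℝ) • (x ^ 4 : ℝ)
          = (Real.sqrt (2 * π * v))⁻¹ * (x ^ 4 * Real.exp (-b * x ^ 2)) := by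
        intro x
        simp only [smul_eq_mul, Real.coe_toNNReal _ (gaussianPDFReal_nonneg 0 v x)]
        rw [hpdf]; ring
      simp only [NNReal.smul_def]
      rw [integral_congr_ae (Eventually.of_forall this), integral_const_mul, integral_gauss4 hb]
      rw [show π / b = 2 * π * (v:ℝ) by rw [hbdef]; field_simp]
      rw [show (Real.sqrt (2*π*(v:ℝ)))⁻¹ * (3 / (4 * b ^ 2) * Real.sqrt (2 * π * (v:ℝ)))
          = (Real.sqrt (2*π*(v:ℝ)))⁻¹ * Real.sqrt (2 * π * (v:ℝ)) * (3 / (4 * b ^ 2)) by ring,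
        inv_mul_cancel₀ (by positivity : Real.sqrt (2*π*(v:ℝ)) ≠ 0), one_mul, hbdef]
      rw [show ((2 * (v:ℝ))⁻¹) ^ 2 = ((2*(v:ℝ))^2)⁻¹ by rw [inv_pow]]
      rw [div_eq_mul_inv]
      rw [show (4 * ((2 * (v:ℝ)) ^ 2)⁻¹)⁻¹ = (v:ℝ)^2 by
        rw [mul_inv, inv_inv]; field_simp; ring]

lemma fourth_moment_map {Ω : Type*} [MeasurableSpace Ω] {P : Measure Ω} {X : Ω → ℝ}
    (hX : Measurable X) {v : ℝ≥0} (h : Measure.map X P = gaussianReal 0 v) :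
    Integrable (fun ω => X ω ^ 4) P ∧ ∫ ω, X ω ^ 4 ∂P = 3 * (v : ℝ) ^ 2 := by
  obtain ⟨hint, hval⟩ := fourth_moment_gaussianReal v
  rw [← h] at hint hval
  have hsm : AEStronglyMeasurable (fun x : ℝ => x ^ 4) (Measure.map X P) :=
    (measurable_id.pow_const 4).aestronglyMeasurable
  constructor
  · exact (integrable_map_measure hsm hX.aemeasurable).mp hint
  · rw [integral_map hX.aemeasurable hsm] at hval
    exact hval

lemma gaussmap_single {Ω : Type*} [MeasurableSpace Ω] {u : ℝ → Ω → ℝ} {P : Measure Ω}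
    {K : ℝ → ℝ → ℝ} (hG : IsCenteredGaussianProcess u P K) {s : ℝ} (hs : 0 ≤ s) :
    Measure.map (u s) P = gaussianReal 0 (K s s).toNNReal := by
  have h := hG 1 (fun _ => s) (fun _ => hs) (fun _ => 1)
  simpa using h

lemma gaussmap_pair {Ω : Type*} [MeasurableSpace Ω] {u : ℝ → Ω → ℝ} {P : Measure Ω}
    {K : ℝ → ℝ → ℝ} (hG : IsCenteredGaussianProcess u P K) {s r : ℝ} (hs : 0 ≤ s)
    (hr : 0 ≤ r) (c₁ c₂ : ℝ) :
    Measure.map (fun ω => c₁ * u s ω + c₂ * u r ω) P =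
      gaussianReal 0 (c₁ ^ 2 * K s s + c₁ * c₂ * (K s r + K r s) + c₂ ^ 2 * K r r).toNNReal := by
  have h := hG 2 ![s, r] (fun i => by fin_cases i <;> assumption) ![c₁, c₂]
  have h1 : (fun ω => ∑ i : Fin 2, ![c₁, c₂] i * u (![s, r] i) ω)
      = fun ω => c₁ * u s ω + c₂ * u r ω := by
    funext ω; simp [Fin.sum_univ_two]
  have h2 : (∑ i : Fin 2, ∑ j : Fin 2, ![c₁, c₂] i * ![c₁, c₂] j * K (![s, r] i) (![s, r] j))
      = c₁ ^ 2 * K s s + c₁ * c₂ * (K s r + K r s) + c₂ ^ 2 * K r r := by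
    simp [Fin.sum_univ_two]; ring
  rw [h1, h2] at h
  exact h

lemma integral_sq_mul_sq {Ω : Type*} [MeasurableSpace Ω] (P : Measure Ω) {X Y : Ω → ℝ}
    (hX : Measurable X) (hY : Measurable Y) {a c vp vm : ℝ}
    (ha : 0 ≤ a) (hc : 0 ≤ c) (hvp : 0 ≤ vp) (hvm : 0 ≤ vm)
    (hXa : Measure.map X P = gaussianReal 0 a.toNNReal)
    (hYc : Measure.map Y P = gaussianReal 0 c.toNNReal)
    (hp : Measure.map (fun ω => X ω + Y ω) P = gaussianReal 0 vp.toNNReal)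
    (hm : Measure.map (fun ω => X ω - Y ω) P = gaussianReal 0 vm.toNNReal) :
    Integrable (fun ω => X ω ^ 2 * Y ω ^ 2) P ∧
      ∫ ω, X ω ^ 2 * Y ω ^ 2 ∂P = (3 * vp ^ 2 + 3 * vm ^ 2 - 6 * a ^ 2 - 6 * c ^ 2) / 12 := by
  obtain ⟨hiX, hvX⟩ := fourth_moment_map hX hXa
  obtain ⟨hiY, hvY⟩ := fourth_moment_map hY hYc
  obtain ⟨hip, hvp'⟩ := fourth_moment_map (hX.add hY) hp
  obtain ⟨him, hvm'⟩ := fourth_moment_map (hX.sub hY) hm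
  rw [Real.coe_toNNReal _ ha] at hvX
  rw [Real.coe_toNNReal _ hc] at hvY
  rw [Real.coe_toNNReal _ hvp] at hvp'
  rw [Real.coe_toNNReal _ hvm] at hvm'
  have hkey : (fun ω => X ω ^ 2 * Y ω ^ 2) = fun ω =>
      ((X ω + Y ω) ^ 4 + (X ω - Y ω) ^ 4 - 2 * X ω ^ 4 - 2 * Y ω ^ 4) / 12 := by
    funext ω; ring
  have hint : Integrable (fun ω =>
      ((X ω + Y ω) ^ 4 + (X ω - Y ω) ^ 4 - 2 * X ω ^ 4 - 2 * Y ω ^ 4) / 12) P :=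
    (((hip.add him).sub (hiX.const_mul 2)).sub (hiY.const_mul 2)).div_const 12
  constructor
  · rw [hkey]; exact hint
  · simp only [Pi.add_apply, Pi.sub_apply] at hip him hvp' hvm'
    rw [hkey, integral_div, integral_sub, integral_sub, integral_add hip him,
      integral_const_mul, integral_const_mul, hvp', hvm', hvX, hvY]
    · ring
    · exact hip.add him
    · exact hiX.const_mul 2
    · exact ((hip.add him).sub (hiX.const_mul 2))
    · exact hiY.const_mul 2

noncomputable def Kou (μ s t : ℝ) : ℝ :=
  Real.exp (-(μ * (s + t))) * (Real.exp (2 * μ * min s t) - 1) / (2 * μ)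

lemma Kou_symm (μ s t : ℝ) : Kou μ s t = Kou μ t s := by
  unfold Kou; rw [min_comm, add_comm]

lemma Kou_nonneg {μ : ℝ} (hμ : 0 < μ) {s t : ℝ} (hs : 0 ≤ s) (ht : 0 ≤ t) :
    0 ≤ Kou μ s t := by
  unfold Kou
  apply div_nonneg _ (by positivity)
  apply mul_nonneg (Real.exp_nonneg _)
  rw [sub_nonneg, show (1:ℝ) = Real.exp 0 by simp]
  apply Real.exp_le_exp.mpr
  have : 0 ≤ min s t := le_min hs ht
  positivity

lemma Kou_diag {μ : ℝ} (hμ : 0 < μ) (s : ℝ) :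
    Kou μ s s = (1 - Real.exp (-(2 * μ * s))) / (2 * μ) := by
  unfold Kou
  rw [min_self]
  congr 1
  rw [mul_sub, mul_one, ← Real.exp_add]
  ring_nf
  rw [Real.exp_zero]

lemma aux_vm_nonneg {a b : ℝ} (ha : 1 ≤ a) (hab : a ≤ b) :
    0 ≤ b ^ 2 * (a ^ 2 - 1) + a ^ 2 * (b ^ 2 - 1) - 2 * (a * b) * (a ^ 2 - 1) := by
  nlinarith [sq_nonneg (a - b), sq_nonneg (a * b - 1), sq_nonneg (a + b), sq_nonneg a,
    mul_nonneg (sub_nonneg.2 ha) (sub_nonneg.2 hab)]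

lemma Kou_vm_nonneg {μ : ℝ} (hμ : 0 < μ) {s t : ℝ} (hs : 0 ≤ s) (ht : 0 ≤ t) :
    0 ≤ Kou μ s s + Kou μ t t - (Kou μ s t + Kou μ t s) := by
  -- reduce to the case s ≤ t by symmetry
  wlog hst : s ≤ t generalizing s t
  · have h := this ht hs (le_of_not_ge hst)
    rw [Kou_symm μ t s]
    rw [Kou_symm μ t s] at h
    linarith [h]
  set a : ℝ := Real.exp (μ * s) with hadef
  set b : ℝ := Real.exp (μ * t) with hbdef
  have ha1 : 1 ≤ a := by rw [hadef]; exact Real.one_le_exp (by positivity)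
  have hab : a ≤ b := by
    rw [hadef, hbdef]; exact Real.exp_le_exp.mpr (by nlinarith)
  have ha0 : 0 < a := Real.exp_pos _
  have hb0 : 0 < b := Real.exp_pos _
  have hKst : Kou μ s t = (a ^ 2 - 1) / (a * b) / (2 * μ) := by
    unfold Kou
    rw [min_eq_left hst]
    congr 1
    rw [show -(μ * (s + t)) = -(μ * s) + -(μ * t) by ring, Real.exp_add,
      show 2 * μ * s = μ * s + μ * s by ring, Real.exp_add, Real.exp_neg, Real.exp_neg,
      ← hadef, ← hbdef]
    field_simp
  have hKss : Kou μ s s = (a ^ 2 - 1) / (a * a) / (2 * μ) := by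
    unfold Kou
    rw [min_self]
    congr 1
    rw [show -(μ * (s + s)) = -(μ * s) + -(μ * s) by ring, Real.exp_add,
      show 2 * μ * s = μ * s + μ * s by ring, Real.exp_add, Real.exp_neg, ← hadef]
    field_simp
  have hKtt : Kou μ t t = (b ^ 2 - 1) / (b * b) / (2 * μ) := by
    unfold Kou
    rw [min_self]
    congr 1
    rw [show -(μ * (t + t)) = -(μ * t) + -(μ * t) by ring, Real.exp_add,
      show 2 * μ * t = μ * t + μ * t by ring, Real.exp_add, Real.exp_neg, ← hbdef]
    field_simp
  rw [hKst, hKss, hKtt, Kou_symm μ t s, hKst]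
  have hkey := aux_vm_nonneg ha1 hab
  have h1 : (a ^ 2 - 1) / (a * a) + (b ^ 2 - 1) / (b * b) - ((a^2-1)/(a*b) + (a^2-1)/(a*b))
      = (b ^ 2 * (a ^ 2 - 1) + a ^ 2 * (b ^ 2 - 1) - 2 * (a * b) * (a ^ 2 - 1)) / (a^2 * b^2) := by
    field_simp
    ring
  have h2 : 0 ≤ (a ^ 2 - 1) / (a * a) + (b ^ 2 - 1) / (b * b)
      - ((a^2-1)/(a*b) + (a^2-1)/(a*b)) := by
    rw [h1]; positivity
  have h3 : (a ^ 2 - 1) / (a * a) / (2*μ) + (b ^ 2 - 1) / (b * b) / (2*μ)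
      - ((a^2-1)/(a*b)/(2*μ) + (a^2-1)/(a*b)/(2*μ))
      = ((a ^ 2 - 1) / (a * a) + (b ^ 2 - 1) / (b * b)
        - ((a^2-1)/(a*b) + (a^2-1)/(a*b))) / (2*μ) := by ring
  rw [h3]
  exact div_nonneg h2 (by positivity)

lemma ftc_helper {f F : ℝ → ℝ} (hF : ∀ x, HasDerivAt F (f x) x) (hf : Continuous f)
    (a b : ℝ) : ∫ x in a..b, f x = F b - F a :=
  intervalIntegral.integral_eq_sub_of_hasDerivAt (fun x _ => hF x)
    (hf.intervalIntegrable a b)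

lemma hasDerivAt_exp_mul (c x : ℝ) :
    HasDerivAt (fun y : ℝ => Real.exp (c * y)) (c * Real.exp (c * x)) x := by
  have h : HasDerivAt (fun y : ℝ => c * y) c x := by
    simpa using (hasDerivAt_id x).const_mul c
  simpa [mul_comm] using h.exp

lemma hasDerivAt_mul_exp (c x : ℝ) :
    HasDerivAt (fun y : ℝ => y * Real.exp (c * y))
      (Real.exp (c * x) + c * (x * Real.exp (c * x))) x := by
  have h := (hasDerivAt_id x).mul (hasDerivAt_exp_mul c x)
  refine h.congr_deriv ?_
  simp only [id_eq]
  ring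

lemma exp_p2 (μ x : ℝ) : Real.exp (2 * μ * x) = Real.exp (μ * x) ^ 2 := by
  rw [sq, ← Real.exp_add]; congr 1; ring

lemma exp_m2 (μ x : ℝ) : Real.exp (-2 * μ * x) = (Real.exp (μ * x) ^ 2)⁻¹ := by
  rw [sq, ← Real.exp_add, ← Real.exp_neg]; congr 1; ring

lemma exp_m4 (μ x : ℝ) : Real.exp (-4 * μ * x) = (Real.exp (μ * x) ^ 4)⁻¹ := by
  rw [show (Real.exp (μ * x) ^ 4) = Real.exp (μ*x) * Real.exp (μ*x) * Real.exp (μ*x)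
      * Real.exp (μ*x) by ring, ← Real.exp_add, ← Real.exp_add, ← Real.exp_add,
    ← Real.exp_neg]
  congr 1; ring

noncomputable def gd (μ s : ℝ) : ℝ := (1 - Real.exp (-2 * μ * s)) / (2 * μ)

lemma Kou_diag' {μ : ℝ} (hμ : 0 < μ) (s : ℝ) : Kou μ s s = gd μ s := by
  rw [Kou_diag hμ, gd]
  congr 2
  congr 1
  ring

lemma Kou_sq_le {μ : ℝ} (hμ : 0 < μ) {x r : ℝ} (hxr : x ≤ r) :
    (Kou μ x r) ^ 2 = Real.exp (-2*μ*r) * (Real.exp (2*μ*x) - 2 + Real.exp (-2*μ*x))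
      / (4 * μ ^ 2) := by
  unfold Kou
  rw [min_eq_left hxr]
  have e1 : Real.exp (-(μ * (x + r))) = (Real.exp (μ*x) * Real.exp (μ*r))⁻¹ := by
    rw [← Real.exp_add, ← Real.exp_neg]; congr 1; ring
  simp only [e1, exp_p2, exp_m2]
  have h1 := Real.exp_ne_zero (μ*x)
  have h2 := Real.exp_ne_zero (μ*r)
  have h3 : μ ≠ 0 := ne_of_gt hμ
  field_simp
  ring

noncomputable def Aval (μ t : ℝ) : ℝ := t / (2*μ) - (1 - Real.exp (-2*μ*t)) / (4*μ^2)

lemma intD2 {μ : ℝ} (hμ : 0 < μ) {t : ℝ} (ht : 0 ≤ t) :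
    ∫ x in Ioc (0:ℝ) t, gd μ x = Aval μ t := by
  rw [← intervalIntegral.integral_of_le ht]
  have hF : ∀ x : ℝ, HasDerivAt (fun y => y / (2*μ) - (1 - Real.exp (-2*μ*y)) / (4*μ^2))
      (gd μ x) x := by
    intro x
    have h1 : HasDerivAt (fun y : ℝ => y / (2*μ)) (1 / (2*μ)) x :=
      (hasDerivAt_id x).div_const _
    have h2 : HasDerivAt (fun y : ℝ => (1 - Real.exp (-2*μ*y)) / (4*μ^2))
        ((0 - -2*μ*Real.exp (-2*μ*x)) / (4*μ^2)) x := by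
      exact (((hasDerivAt_const x (1:ℝ)).sub (hasDerivAt_exp_mul (-2*μ) x)).div_const _)
    have h := h1.sub h2
    refine h.congr_deriv ?_
    unfold gd
    field_simp
    ring
  rw [ftc_helper hF (by unfold gd; fun_prop) 0 t]
  unfold Aval
  norm_num

noncomputable def Bval (μ r t : ℝ) : ℝ :=
  (2 - 2*Real.exp (-2*μ*r) - Real.exp (-2*μ*t)*Real.exp (2*μ*r) + 2*Real.exp (-2*μ*t)
    - Real.exp (-2*μ*t)*Real.exp (-2*μ*r)) / (8*μ^3) - r * Real.exp (-2*μ*r) / (2*μ^2)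

lemma intD1 {μ : ℝ} (hμ : 0 < μ) {r t : ℝ} (hr : 0 ≤ r) (hrt : r ≤ t) :
    ∫ x in Ioc (0:ℝ) t, (Kou μ x r) ^ 2 = Bval μ r t := by
  have hcont : Continuous fun x => (Kou μ x r) ^ 2 := by
    unfold Kou
    have : Continuous fun x : ℝ => min x r := continuous_id.min continuous_const
    fun_prop
  have hsplit : Ioc (0:ℝ) t = Ioc 0 r ∪ Ioc r t := (Ioc_union_Ioc_eq_Ioc hr hrt).symm
  rw [hsplit, setIntegral_union (Ioc_disjoint_Ioc_of_le le_rfl) measurableSet_Ioc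
    hcont.integrableOn_Ioc hcont.integrableOn_Ioc]
  have hlow : ∫ x in Ioc (0:ℝ) r, (Kou μ x r) ^ 2
      = ∫ x in Ioc (0:ℝ) r,
        Real.exp (-2*μ*r) * (Real.exp (2*μ*x) - 2 + Real.exp (-2*μ*x)) / (4*μ^2) :=
    setIntegral_congr_fun measurableSet_Ioc (fun x hx => Kou_sq_le hμ hx.2)
  have hhigh : ∫ x in Ioc r t, (Kou μ x r) ^ 2
      = ∫ x in Ioc r t,
        Real.exp (-2*μ*x) * (Real.exp (2*μ*r) - 2 + Real.exp (-2*μ*r)) / (4*μ^2) := by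
    refine setIntegral_congr_fun measurableSet_Ioc (fun x hx => ?_)
    rw [show Kou μ x r = Kou μ r x from Kou_symm μ x r, Kou_sq_le hμ hx.1.le]
  rw [hlow, hhigh, ← intervalIntegral.integral_of_le hr, ← intervalIntegral.integral_of_le hrt]
  have hF1 : ∀ x : ℝ, HasDerivAt (fun y =>
      Real.exp (-2*μ*r) * (Real.exp (2*μ*y)/(2*μ) - 2*y - Real.exp (-2*μ*y)/(2*μ)) / (4*μ^2))
      (Real.exp (-2*μ*r) * (Real.exp (2*μ*x) - 2 + Real.exp (-2*μ*x)) / (4*μ^2)) x := by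
    intro x
    have h1 : HasDerivAt (fun y : ℝ => Real.exp (2*μ*y)/(2*μ) - 2*y - Real.exp (-2*μ*y)/(2*μ))
        (2*μ*Real.exp (2*μ*x)/(2*μ) - 2*1 - -2*μ*Real.exp (-2*μ*x)/(2*μ)) x := by
      exact (((hasDerivAt_exp_mul (2*μ) x).div_const _).sub
        ((hasDerivAt_id x).const_mul 2)).sub ((hasDerivAt_exp_mul (-2*μ) x).div_const _)
    have h := (h1.const_mul (Real.exp (-2*μ*r))).div_const (4*μ^2)
    refine h.congr_deriv ?_
    field_simp
    ring
  have hF2 : ∀ x : ℝ, HasDerivAt (fun y =>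
      (Real.exp (2*μ*r) - 2 + Real.exp (-2*μ*r)) * (-(Real.exp (-2*μ*y)/(2*μ))) / (4*μ^2))
      (Real.exp (-2*μ*x) * (Real.exp (2*μ*r) - 2 + Real.exp (-2*μ*r)) / (4*μ^2)) x := by
    intro x
    have h1 : HasDerivAt (fun y : ℝ => -(Real.exp (-2*μ*y)/(2*μ)))
        (-(-2*μ*Real.exp (-2*μ*x)/(2*μ))) x :=
      ((hasDerivAt_exp_mul (-2*μ) x).div_const _).neg
    have h := (h1.const_mul (Real.exp (2*μ*r) - 2 + Real.exp (-2*μ*r))).div_const (4*μ^2)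
    refine h.congr_deriv ?_
    field_simp
  rw [ftc_helper hF1 (by fun_prop) 0 r, ftc_helper hF2 (by fun_prop) r t]
  unfold Bval
  have h1 := Real.exp_ne_zero (μ*r)
  have h2 := Real.exp_ne_zero (μ*t)
  have h3 : μ ≠ 0 := ne_of_gt hμ
  simp only [mul_zero, Real.exp_zero]
  simp only [exp_p2, exp_m2]
  field_simp
  ring

noncomputable def Fou (μ t : ℝ) : ℝ :=
  t^2/(4*μ^2) + t/(4*μ^3) + 5*t*Real.exp (-2*μ*t)/(4*μ^3)
    + (3*Real.exp (-4*μ*t) + 6*Real.exp (-2*μ*t) - 9)/(16*μ^4)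

lemma intD3 {μ : ℝ} (hμ : 0 < μ) {t : ℝ} (ht : 0 ≤ t) :
    ∫ x in Ioc (0:ℝ) t, (gd μ x * Aval μ t + 2 * Bval μ x t) = Fou μ t := by
  rw [← intervalIntegral.integral_of_le ht]
  set A := Aval μ t with hA
  have hF : ∀ x : ℝ, HasDerivAt (fun y =>
      A * (y + Real.exp (-2*μ*y)/(2*μ))/(2*μ)
      + 2 * ((2*y - 2*(Real.exp (-2*μ*y))/(-2*μ) - Real.exp (-2*μ*t)*(Real.exp (2*μ*y)/(2*μ))
          + 2*Real.exp (-2*μ*t)*y - Real.exp (-2*μ*t)*(Real.exp (-2*μ*y)/(-2*μ)))/(8*μ^3)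
        - (-(y*Real.exp (-2*μ*y))/(2*μ) - Real.exp (-2*μ*y)/(4*μ^2))/(2*μ^2)))
      (gd μ x * A + 2 * Bval μ x t) x := by
    intro x
    have e2 : HasDerivAt (fun y : ℝ => Real.exp (-2*μ*y)) (-2*μ*Real.exp (-2*μ*x)) x :=
      hasDerivAt_exp_mul (-2*μ) x
    have e2' : HasDerivAt (fun y : ℝ => Real.exp (2*μ*y)) (2*μ*Real.exp (2*μ*x)) x :=
      hasDerivAt_exp_mul (2*μ) x
    have eme : HasDerivAt (fun y : ℝ => y*Real.exp (-2*μ*y))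
        (Real.exp (-2*μ*x) + -2*μ*(x*Real.exp (-2*μ*x))) x := hasDerivAt_mul_exp (-2*μ) x
    have hid : HasDerivAt (fun y : ℝ => y) 1 x := hasDerivAt_id x
    have h1 : HasDerivAt (fun y : ℝ => A * (y + Real.exp (-2*μ*y)/(2*μ))/(2*μ))
        (A * (1 + -2*μ*Real.exp (-2*μ*x)/(2*μ))/(2*μ)) x :=
      (((hid.add (e2.div_const _)).const_mul A).div_const _)
    have h2 : HasDerivAt (fun y : ℝ =>
        (2*y - 2*(Real.exp (-2*μ*y))/(-2*μ) - Real.exp (-2*μ*t)*(Real.exp (2*μ*y)/(2*μ))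
          + 2*Real.exp (-2*μ*t)*y - Real.exp (-2*μ*t)*(Real.exp (-2*μ*y)/(-2*μ)))/(8*μ^3))
        ((2*1 - (2*(-2*μ*Real.exp (-2*μ*x)))/(-2*μ) - Real.exp (-2*μ*t)*(2*μ*Real.exp (2*μ*x)/(2*μ))
          + 2*Real.exp (-2*μ*t)*1 - Real.exp (-2*μ*t)*(-2*μ*Real.exp (-2*μ*x)/(-2*μ)))/(8*μ^3)) x := by
      exact (((((hid.const_mul 2).sub ((e2.const_mul 2).div_const _)).sub
        ((e2'.div_const _).const_mul _)).add ((hid.const_mul _))).sub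
        ((e2.div_const _).const_mul _)).div_const _
    have h3 : HasDerivAt (fun y : ℝ =>
        (-(y*Real.exp (-2*μ*y))/(2*μ) - Real.exp (-2*μ*y)/(4*μ^2))/(2*μ^2))
        ((-(Real.exp (-2*μ*x) + -2*μ*(x*Real.exp (-2*μ*x)))/(2*μ)
          - -2*μ*Real.exp (-2*μ*x)/(4*μ^2))/(2*μ^2)) x :=
      (((eme.neg.div_const _).sub (e2.div_const _)).div_const _)
    have h := h1.add (((h2.sub h3)).const_mul 2)
    refine h.congr_deriv ?_
    unfold gd Bval
    have h3' : μ ≠ 0 := ne_of_gt hμ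
    field_simp
    ring
  rw [ftc_helper hF (by unfold gd Bval; fun_prop) 0 t, hA]
  unfold Fou Aval
  have h1 := Real.exp_ne_zero (μ*t)
  have h3 : μ ≠ 0 := ne_of_gt hμ
  simp only [mul_zero, Real.exp_zero, zero_mul]
  simp only [exp_p2, exp_m2, exp_m4]
  field_simp
  ring

lemma intD4 {μ : ℝ} (hμ : 0 < μ) {T : ℝ} (hT : 0 ≤ T) :
    ∫ t in Ioc (0:ℝ) T, Fou μ t =
      (35 - 3 * Real.exp (-4*μ*T) - 32 * Real.exp (-2*μ*T)) / (64 * μ ^ 5)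
      - (9 * T + 10 * T * Real.exp (-2*μ*T)) / (16 * μ ^ 4)
      + T ^ 2 / (8 * μ ^ 3) + T ^ 3 / (12 * μ ^ 2) := by
  rw [← intervalIntegral.integral_of_le hT]
  have hF : ∀ x : ℝ, HasDerivAt (fun y =>
      y^3/(12*μ^2) + y^2/(8*μ^3)
      + 5*(-(y*Real.exp (-2*μ*y))/(2*μ) - Real.exp (-2*μ*y)/(4*μ^2))/(4*μ^3)
      + (3*(-(Real.exp (-4*μ*y))/(4*μ)) + 6*(-(Real.exp (-2*μ*y))/(2*μ)) - 9*y)/(16*μ^4))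
      (Fou μ x) x := by
    intro x
    have e2 : HasDerivAt (fun y : ℝ => Real.exp (-2*μ*y)) (-2*μ*Real.exp (-2*μ*x)) x :=
      hasDerivAt_exp_mul (-2*μ) x
    have e4 : HasDerivAt (fun y : ℝ => Real.exp (-4*μ*y)) (-4*μ*Real.exp (-4*μ*x)) x :=
      hasDerivAt_exp_mul (-4*μ) x
    have eme : HasDerivAt (fun y : ℝ => y*Real.exp (-2*μ*y))
        (Real.exp (-2*μ*x) + -2*μ*(x*Real.exp (-2*μ*x))) x := hasDerivAt_mul_exp (-2*μ) x
    have hid : HasDerivAt (fun y : ℝ => y) 1 x := hasDerivAt_id x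
    have hp3 : HasDerivAt (fun y : ℝ => y^3) (3*x^2) x := by
      simpa using hasDerivAt_pow 3 x
    have hp2 : HasDerivAt (fun y : ℝ => y^2) (2*x) x := by
      simpa using hasDerivAt_pow 2 x
    have h := (((hp3.div_const (12*μ^2)).add (hp2.div_const (8*μ^3))).add
      ((((eme.neg.div_const (2*μ)).sub (e2.div_const (4*μ^2))).const_mul 5).div_const (4*μ^3))).add
      ((((((e4.neg.div_const (4*μ)).const_mul 3).add
        ((e2.neg.div_const (2*μ)).const_mul 6)).sub (hid.const_mul 9)).div_const (16*μ^4)))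
    refine h.congr_deriv ?_
    unfold Fou
    have h3' : μ ≠ 0 := ne_of_gt hμ
    field_simp
    ring
  rw [ftc_helper hF (by unfold Fou; fun_prop) 0 T]
  have h1 := Real.exp_ne_zero (μ*T)
  have h3 : μ ≠ 0 := ne_of_gt hμ
  simp only [mul_zero, Real.exp_zero, zero_mul]
  simp only [exp_p2, exp_m2, exp_m4]
  field_simp
  ring

/-- Let `u` be the zero-started Ornstein–Uhlenbeck process solving `du + μ u dt = dw`,
`ξ(t) = ∫_0^t u²(s) ds`, and `Z = ∫_0^T ξ(t)² dt`. Then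
`E[Z] = (35 - 3e^{-4μT} - 32e^{-2μT})/(64μ⁵) - (9T + 10T e^{-2μT})/(16μ⁴)
  + T²/(8μ³) + T³/(12μ²)`. -/
theorem expectation_Z
    {Ω : Type*} [MeasurableSpace Ω] (P : Measure Ω) [IsProbabilityMeasure P]
    (μ T : ℝ) (hμ : 0 < μ) (hT : 0 < T)
    (u : ℝ → Ω → ℝ) (hmeas : ∀ t, Measurable (u t))
    (hcont : ∀ ω, Continuous fun t => u t ω)
    (hGauss : IsCenteredGaussianProcess u P
      (fun s t => Real.exp (-(μ * (s + t))) * (Real.exp (2 * μ * min s t) - 1) / (2 * μ)))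
    (ξ : ℝ → Ω → ℝ) (hξ : ∀ t ω, ξ t ω = ∫ s in (0:ℝ)..t, (u s ω) ^ 2)
    (Z : Ω → ℝ) (hZ : ∀ ω, Z ω = ∫ t in (0:ℝ)..T, (ξ t ω) ^ 2) :
    ∫ ω, Z ω ∂P =
      (35 - 3 * Real.exp (-(4 * μ * T)) - 32 * Real.exp (-(2 * μ * T))) / (64 * μ ^ 5)
      - (9 * T + 10 * T * Real.exp (-(2 * μ * T))) / (16 * μ ^ 4)
      + T ^ 2 / (8 * μ ^ 3) + T ^ 3 / (12 * μ ^ 2) := by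
  have hG : IsCenteredGaussianProcess u P (Kou μ) := hGauss
  have hμ' : μ ≠ 0 := ne_of_gt hμ
  -- measurability facts
  have hu : Measurable (Function.uncurry u) :=
    measurable_uncurry_of_continuous_of_measurable hcont hmeas
  have husq : Measurable fun p : Ω × ℝ => (u p.2 p.1) ^ 2 :=
    (hu.comp measurable_swap).pow_const 2
  have hξmeas : ∀ t : ℝ, Measurable fun ω => ξ t ω := by
    intro t
    have h1 : Measurable fun ω => ∫ s in Ioc (0:ℝ) t, (u s ω) ^ 2 :=
      (StronglyMeasurable.integral_prod_right'
        (f := fun p : Ω × ℝ => (u p.2 p.1) ^ 2) husq.stronglyMeasurable).measurable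
    have h2 : Measurable fun ω => ∫ s in Ioc t (0:ℝ), (u s ω) ^ 2 :=
      (StronglyMeasurable.integral_prod_right'
        (f := fun p : Ω × ℝ => (u p.2 p.1) ^ 2) husq.stronglyMeasurable).measurable
    have heq : (fun ω => ξ t ω) = fun ω =>
        (∫ s in Ioc (0:ℝ) t, (u s ω) ^ 2) - ∫ s in Ioc t (0:ℝ), (u s ω) ^ 2 := by
      funext ω
      rw [hξ t ω]
      rfl
    rw [heq]
    exact h1.sub h2
  have hξcont : ∀ ω, Continuous fun t => ξ t ω := by
    intro ω
    have h : Continuous fun t => ∫ s in (0:ℝ)..t, (u s ω) ^ 2 :=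
      intervalIntegral.continuous_primitive
        (fun a b => ((hcont ω).pow 2).intervalIntegrable a b) 0
    simp only [hξ]
    exact h
  have hξjoint : Measurable (Function.uncurry ξ) :=
    measurable_uncurry_of_continuous_of_measurable hξcont hξmeas
  have hξnn : ∀ (t : ℝ) ω, 0 ≤ t → 0 ≤ ξ t ω := by
    intro t ω ht
    rw [hξ]
    exact intervalIntegral.integral_nonneg ht fun s _ => sq_nonneg _
  have hξIoc : ∀ (t : ℝ) ω, 0 ≤ t → ξ t ω = ∫ s in Ioc (0:ℝ) t, (u s ω) ^ 2 := by
    intro t ω ht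
    rw [hξ, intervalIntegral.integral_of_le ht]
  have hZeq : ∀ ω, Z ω = ∫ t in Ioc (0:ℝ) T, (ξ t ω) ^ 2 := by
    intro ω
    rw [hZ, intervalIntegral.integral_of_le hT.le]
  have hZnn : ∀ ω, 0 ≤ Z ω := by
    intro ω
    rw [hZeq]
    exact setIntegral_nonneg measurableSet_Ioc fun t _ => sq_nonneg _
  have hZmeas : Measurable Z := by
    have h1 : Measurable fun ω => ∫ t in Ioc (0:ℝ) T, (ξ t ω) ^ 2 :=
      (StronglyMeasurable.integral_prod_right'
        (f := fun p : Ω × ℝ => (ξ p.2 p.1) ^ 2)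
        ((hξjoint.comp measurable_swap).pow_const 2).stronglyMeasurable).measurable
    have heq : Z = fun ω => ∫ t in Ioc (0:ℝ) T, (ξ t ω) ^ 2 := funext hZeq
    rw [heq]
    exact h1
  -- probabilistic core: second moments of products
  have hq : ∀ s r : ℝ, 0 ≤ s → 0 ≤ r →
      Integrable (fun ω => (u s ω) ^ 2 * (u r ω) ^ 2) P ∧
      ∫ ω, (u s ω) ^ 2 * (u r ω) ^ 2 ∂P = gd μ s * gd μ r + 2 * (Kou μ s r) ^ 2 := by
    intro s r hs hr
    have h1 := gaussmap_single hG hs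
    have h2 := gaussmap_single hG hr
    have hp := gaussmap_pair hG hs hr 1 1
    have hm := gaussmap_pair hG hs hr 1 (-1)
    rw [show (fun ω => (1:ℝ) * u s ω + 1 * u r ω) = fun ω => u s ω + u r ω by
      funext ω; ring] at hp
    rw [show ((1:ℝ) ^ 2 * Kou μ s s + 1 * 1 * (Kou μ s r + Kou μ r s) + 1 ^ 2 * Kou μ r r)
        = Kou μ s s + Kou μ r r + 2 * Kou μ s r by rw [Kou_symm μ r s]; ring] at hp
    rw [show (fun ω => (1:ℝ) * u s ω + (-1) * u r ω) = fun ω => u s ω - u r ω by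
      funext ω; ring] at hm
    rw [show ((1:ℝ) ^ 2 * Kou μ s s + 1 * (-1) * (Kou μ s r + Kou μ r s) + (-1) ^ 2 * Kou μ r r)
        = Kou μ s s + Kou μ r r - 2 * Kou μ s r by rw [Kou_symm μ r s]; ring] at hm
    have ha := Kou_nonneg hμ hs hs
    have hc := Kou_nonneg hμ hr hr
    have hsr := Kou_nonneg hμ hs hr
    have hvp : 0 ≤ Kou μ s s + Kou μ r r + 2 * Kou μ s r := by linarith
    have hvm : 0 ≤ Kou μ s s + Kou μ r r - 2 * Kou μ s r := by
      have h := Kou_vm_nonneg hμ hs hr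
      rw [Kou_symm μ r s] at h
      linarith
    obtain ⟨hint, hval⟩ := integral_sq_mul_sq P (hmeas s) (hmeas r) ha hc hvp hvm h1 h2 hp hm
    refine ⟨hint, ?_⟩
    rw [hval, ← Kou_diag' hμ s, ← Kou_diag' hμ r]
    ring
  -- continuity and nonnegativity of the deterministic pieces
  have hgdc : Continuous (gd μ) := by unfold gd; fun_prop
  have hKoc : ∀ s, Continuous fun r => Kou μ s r := by
    intro s
    unfold Kou
    have h : Continuous fun r : ℝ => min s r := continuous_const.min continuous_id
    fun_prop
  have hBc : ∀ t, Continuous fun s => Bval μ s t := by intro t; unfold Bval; fun_prop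
  have hgdnn : ∀ s : ℝ, 0 ≤ s → 0 ≤ gd μ s := by
    intro s hs
    rw [← Kou_diag' hμ]
    exact Kou_nonneg hμ hs hs
  have hAnn : ∀ t : ℝ, 0 ≤ t → 0 ≤ Aval μ t := by
    intro t ht
    rw [← intD2 hμ ht]
    exact setIntegral_nonneg measurableSet_Ioc fun s hs => hgdnn s hs.1.le
  have hBnn : ∀ s t : ℝ, 0 ≤ s → s ≤ t → 0 ≤ Bval μ s t := by
    intro s t hs hst
    rw [← intD1 hμ hs hst]
    exact setIntegral_nonneg measurableSet_Ioc fun x _ => sq_nonneg _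
  have hGnn : ∀ t : ℝ, 0 ≤ t → ∀ s ∈ Ioc (0:ℝ) t, 0 ≤ gd μ s * Aval μ t + 2 * Bval μ s t := by
    intro t ht s hs
    have h1 := mul_nonneg (hgdnn s hs.1.le) (hAnn t ht)
    have h2 := hBnn s t hs.1.le hs.2
    linarith
  have hFnn : ∀ t : ℝ, 0 ≤ t → 0 ≤ Fou μ t := by
    intro t ht
    rw [← intD3 hμ ht]
    exact setIntegral_nonneg measurableSet_Ioc (hGnn t ht)
  -- the inner fixed-`t` computation
  have hstep_t : ∀ t : ℝ, t ∈ Ioc (0:ℝ) T →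
      ∫⁻ ω, ENNReal.ofReal ((ξ t ω) ^ 2) ∂P = ENNReal.ofReal (Fou μ t) := by
    intro t ht
    have ht0 : (0:ℝ) ≤ t := ht.1.le
    calc ∫⁻ ω, ENNReal.ofReal ((ξ t ω) ^ 2) ∂P
        = ∫⁻ ω, (∫⁻ s in Ioc (0:ℝ) t, ENNReal.ofReal ((u s ω) ^ 2 * ξ t ω)) ∂P := by
          refine lintegral_congr fun ω => ?_
          have hxi := hξIoc t ω ht0
          have heq : (ξ t ω) ^ 2 = ∫ s in Ioc (0:ℝ) t, (u s ω) ^ 2 * ξ t ω := by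
            rw [MeasureTheory.integral_mul_const, ← hxi, sq]
          rw [heq]
          refine ofReal_integral_eq_lintegral_ofReal ?_ ?_
          · exact (((hcont ω).pow 2).mul continuous_const).integrableOn_Ioc
          · exact Eventually.of_forall fun s => mul_nonneg (sq_nonneg _) (hξnn t ω ht0)
      _ = ∫⁻ s in Ioc (0:ℝ) t, (∫⁻ ω, ENNReal.ofReal ((u s ω) ^ 2 * ξ t ω) ∂P) := by
          apply lintegral_lintegral_swap
          exact (ENNReal.measurable_ofReal.comp (((hu.comp measurable_swap).pow_const 2).mul
            ((hξmeas t).comp measurable_fst))).aemeasurable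
      _ = ∫⁻ s in Ioc (0:ℝ) t, ENNReal.ofReal (gd μ s * Aval μ t + 2 * Bval μ s t) := by
          refine setLIntegral_congr_fun measurableSet_Ioc (fun s hs => ?_)
          calc ∫⁻ ω, ENNReal.ofReal ((u s ω) ^ 2 * ξ t ω) ∂P
              = ∫⁻ ω, (∫⁻ r in Ioc (0:ℝ) t, ENNReal.ofReal ((u s ω) ^ 2 * (u r ω) ^ 2)) ∂P := by
                refine lintegral_congr fun ω => ?_
                have hxi := hξIoc t ω ht0
                have heq : (u s ω) ^ 2 * ξ t ω
                    = ∫ r in Ioc (0:ℝ) t, (u s ω) ^ 2 * (u r ω) ^ 2 := by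
                  rw [hxi]
                  exact (integral_const_mul _ _).symm
                rw [heq]
                refine ofReal_integral_eq_lintegral_ofReal ?_ ?_
                · exact (continuous_const.mul ((hcont ω).pow 2)).integrableOn_Ioc
                · exact Eventually.of_forall fun r => mul_nonneg (sq_nonneg _) (sq_nonneg _)
            _ = ∫⁻ r in Ioc (0:ℝ) t, (∫⁻ ω, ENNReal.ofReal ((u s ω) ^ 2 * (u r ω) ^ 2) ∂P) := by
                apply lintegral_lintegral_swap
                exact (ENNReal.measurable_ofReal.comp
                  ((((hmeas s).comp measurable_fst).pow_const 2).mul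
                    ((hu.comp measurable_swap).pow_const 2))).aemeasurable
            _ = ∫⁻ r in Ioc (0:ℝ) t, ENNReal.ofReal (gd μ s * gd μ r + 2 * (Kou μ s r) ^ 2) := by
                refine setLIntegral_congr_fun measurableSet_Ioc
                  (fun r hr => ?_)
                obtain ⟨hint, hval⟩ := hq s r hs.1.le hr.1.le
                rw [← hval]
                exact (ofReal_integral_eq_lintegral_ofReal hint
                  (Eventually.of_forall fun ω => mul_nonneg (sq_nonneg _) (sq_nonneg _))).symm
            _ = ENNReal.ofReal (gd μ s * Aval μ t + 2 * Bval μ s t) := by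
                have hint1 : IntegrableOn (fun r => gd μ s * gd μ r) (Ioc (0:ℝ) t) :=
                  (continuous_const.mul hgdc).integrableOn_Ioc
                have hint2 : IntegrableOn (fun r => 2 * (Kou μ s r) ^ 2) (Ioc (0:ℝ) t) :=
                  (continuous_const.mul ((hKoc s).pow 2)).integrableOn_Ioc
                have hsym : ∫ r in Ioc (0:ℝ) t, (Kou μ s r) ^ 2
                    = ∫ r in Ioc (0:ℝ) t, (Kou μ r s) ^ 2 :=
                  setIntegral_congr_fun measurableSet_Ioc fun r _ => by rw [Kou_symm μ s r]
                have hval : ∫ r in Ioc (0:ℝ) t, (gd μ s * gd μ r + 2 * (Kou μ s r) ^ 2)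
                    = gd μ s * Aval μ t + 2 * Bval μ s t := by
                  rw [integral_add hint1 hint2, integral_const_mul, integral_const_mul,
                    intD2 hμ ht0, hsym, intD1 hμ hs.1.le hs.2]
                rw [← hval]
                have hc12 : Continuous fun r => gd μ s * gd μ r + 2 * (Kou μ s r) ^ 2 :=
                  (continuous_const.mul hgdc).add (continuous_const.mul ((hKoc s).pow 2))
                refine (ofReal_integral_eq_lintegral_ofReal hc12.integrableOn_Ioc ?_).symm
                refine (ae_restrict_iff' measurableSet_Ioc).2 (Eventually.of_forall fun r hr => ?_)
                have h1 := mul_nonneg (hgdnn s hs.1.le) (hgdnn r hr.1.le)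
                have h2 := sq_nonneg (Kou μ s r)
                simp only [Pi.zero_apply]
                linarith
      _ = ENNReal.ofReal (Fou μ t) := by
          rw [← intD3 hμ ht0]
          refine (ofReal_integral_eq_lintegral_ofReal ?_ ?_).symm
          · exact ((hgdc.mul continuous_const).add (continuous_const.mul (hBc t))).integrableOn_Ioc
          · exact (ae_restrict_iff' measurableSet_Ioc).2 (Eventually.of_forall (hGnn t ht0))
  -- main chain
  rw [integral_eq_lintegral_of_nonneg_ae (Eventually.of_forall hZnn)
    hZmeas.aestronglyMeasurable]
  have hFouc : Continuous (Fou μ) := by unfold Fou; fun_prop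
  have hZl : ∫⁻ ω, ENNReal.ofReal (Z ω) ∂P = ENNReal.ofReal (∫ t in Ioc (0:ℝ) T, Fou μ t) := by
    calc ∫⁻ ω, ENNReal.ofReal (Z ω) ∂P
        = ∫⁻ ω, (∫⁻ t in Ioc (0:ℝ) T, ENNReal.ofReal ((ξ t ω) ^ 2)) ∂P := by
          refine lintegral_congr fun ω => ?_
          rw [hZeq ω]
          refine ofReal_integral_eq_lintegral_ofReal ?_
            (Eventually.of_forall fun t => sq_nonneg _)
          exact ((hξcont ω).pow 2).integrableOn_Ioc
      _ = ∫⁻ t in Ioc (0:ℝ) T, (∫⁻ ω, ENNReal.ofReal ((ξ t ω) ^ 2) ∂P) := by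
          apply lintegral_lintegral_swap
          exact (ENNReal.measurable_ofReal.comp
            ((hξjoint.comp measurable_swap).pow_const 2)).aemeasurable
      _ = ∫⁻ t in Ioc (0:ℝ) T, ENNReal.ofReal (Fou μ t) :=
          setLIntegral_congr_fun measurableSet_Ioc hstep_t
      _ = ENNReal.ofReal (∫ t in Ioc (0:ℝ) T, Fou μ t) := by
          refine (ofReal_integral_eq_lintegral_ofReal hFouc.integrableOn_Ioc ?_).symm
          exact (ae_restrict_iff' measurableSet_Ioc).2
            (Eventually.of_forall fun t ht => hFnn t ht.1.le)
  rw [hZl, ENNReal.toReal_ofReal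
    (setIntegral_nonneg measurableSet_Ioc fun t ht => hFnn t ht.1.le), intD4 hμ hT.le]
  rw [show Real.exp (-(4 * μ * T)) = Real.exp (-4*μ*T) by congr 1; ring,
    show Real.exp (-(2 * μ * T)) = Real.exp (-2*μ*T) by congr 1; ring]
end
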